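/- For fixed a, f, σ with a² < 1, f ≠ 0, σ > 0, the function ϑ ↦ γ_*(ϑ) is differentiable on (0, ∞) with derivative γ̇_*(ϑ) = ϑ + ϑ·(f²ϑ² + σ²(1+a²))/√((σ²(1−a²) − f²ϑ²)² + 4f²ϑ²σ²), this derivative is strictly positive for every ϑ > 0, and consequently γ_* is strictly increasing on (0, ∞). -/

import Mathlib

noncomputable section

namespace HiddenAR

/-- The stationary filtering error variance as a function of the noise parameter `ϑ = b`:
`γ_*(ϑ) = (f²ϑ² − σ²(1−a²))/(2f²) + (1/(2f²))·√((σ²(1−a²) − f²ϑ²)² + 4f²ϑ²σ²)`. -/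
def gammaStar (a f σ ϑ : ℝ) : ℝ :=
  (f ^ 2 * ϑ ^ 2 - σ ^ 2 * (1 - a ^ 2)) / (2 * f ^ 2)
    + (1 / (2 * f ^ 2)) *
      Real.sqrt ((σ ^ 2 * (1 - a ^ 2) - f ^ 2 * ϑ ^ 2) ^ 2 + 4 * f ^ 2 * ϑ ^ 2 * σ ^ 2)

lemma Qpos (a f σ ϑ : ℝ) (hf : f ≠ 0) (hσ : 0 < σ) (hϑ : 0 < ϑ) :
    0 < (σ ^ 2 * (1 - a ^ 2) - f ^ 2 * ϑ ^ 2) ^ 2 + 4 * f ^ 2 * ϑ ^ 2 * σ ^ 2 := by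
  have hf2 : 0 < f ^ 2 := by positivity
  positivity

lemma gammaStar_hasDeriv (a f σ : ℝ) (hf : f ≠ 0) (hσ : 0 < σ) (ϑ : ℝ) (hϑ : 0 < ϑ) :
    HasDerivAt (gammaStar a f σ)
        (ϑ + ϑ * (f ^ 2 * ϑ ^ 2 + σ ^ 2 * (1 + a ^ 2)) /
          Real.sqrt ((σ ^ 2 * (1 - a ^ 2) - f ^ 2 * ϑ ^ 2) ^ 2 + 4 * f ^ 2 * ϑ ^ 2 * σ ^ 2)) ϑ := by
  have hf2 : (f : ℝ) ^ 2 ≠ 0 := pow_ne_zero 2 hf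
  set Q : ℝ := (σ ^ 2 * (1 - a ^ 2) - f ^ 2 * ϑ ^ 2) ^ 2 + 4 * f ^ 2 * ϑ ^ 2 * σ ^ 2 with hQdef
  have hQpos : 0 < Q := Qpos a f σ ϑ hf hσ hϑ
  have hs : 0 < Real.sqrt Q := Real.sqrt_pos.mpr hQpos
  -- derivative of inner polynomial
  have hpoly : HasDerivAt (fun t : ℝ =>
      (σ ^ 2 * (1 - a ^ 2) - f ^ 2 * t ^ 2) ^ 2 + 4 * f ^ 2 * t ^ 2 * σ ^ 2)
      (2 * (σ ^ 2 * (1 - a ^ 2) - f ^ 2 * ϑ ^ 2) * (-(f ^ 2 * (2 * ϑ)))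
        + 4 * f ^ 2 * (2 * ϑ) * σ ^ 2) ϑ := by
    have h1 : HasDerivAt (fun t : ℝ => t ^ 2) (2 * ϑ) ϑ := by
      simpa using hasDerivAt_pow 2 ϑ
    have h2 : HasDerivAt (fun t : ℝ => σ ^ 2 * (1 - a ^ 2) - f ^ 2 * t ^ 2)
        (-(f ^ 2 * (2 * ϑ))) ϑ := ((h1.const_mul (f ^ 2)).const_sub _)
    have h3 := (h2.pow 2)
    have h4 : HasDerivAt (fun t : ℝ => 4 * f ^ 2 * t ^ 2 * σ ^ 2)
        (4 * f ^ 2 * (2 * ϑ) * σ ^ 2) ϑ :=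
      (h1.const_mul (4 * f ^ 2)).mul_const (σ ^ 2)
    have h5 := h3.add h4
    exact h5.congr_deriv (by norm_num <;> ring)
  have hsqrt := hpoly.sqrt (ne_of_gt hQpos)
  have hlin : HasDerivAt (fun t : ℝ => (f ^ 2 * t ^ 2 - σ ^ 2 * (1 - a ^ 2)) / (2 * f ^ 2))
      (f ^ 2 * (2 * ϑ) / (2 * f ^ 2)) ϑ := by
    have h1 : HasDerivAt (fun t : ℝ => t ^ 2) (2 * ϑ) ϑ := by
      simpa using hasDerivAt_pow 2 ϑ
    exact ((h1.const_mul (f ^ 2)).sub_const _).div_const _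
  have htot := hlin.add (hsqrt.const_mul (1 / (2 * f ^ 2)))
  have heq : gammaStar a f σ = fun t =>
      (f ^ 2 * t ^ 2 - σ ^ 2 * (1 - a ^ 2)) / (2 * f ^ 2)
        + (1 / (2 * f ^ 2)) *
          Real.sqrt ((σ ^ 2 * (1 - a ^ 2) - f ^ 2 * t ^ 2) ^ 2 + 4 * f ^ 2 * t ^ 2 * σ ^ 2) :=
    rfl
  rw [heq]
  refine htot.congr_deriv ?_
  have hs2 : Real.sqrt Q ^ 2 = Q := Real.sq_sqrt hQpos.le
  have hsne : Real.sqrt Q ≠ 0 := ne_of_gt hs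
  rw [← hQdef]
  field_simp
  ring

/-- `ϑ ↦ γ_*(ϑ)` is differentiable on `(0, ∞)` with derivative
`γ̇_*(ϑ) = ϑ + ϑ·(f²ϑ² + σ²(1+a²))/√((σ²(1−a²) − f²ϑ²)² + 4f²ϑ²σ²)`, the derivative is
strictly positive, and `γ_*` is strictly increasing on `(0, ∞)`. -/
theorem gammaStar_deriv_pos_strictMono (a f σ : ℝ)
    (ha : a ^ 2 < 1) (hf : f ≠ 0) (hσ : 0 < σ) :
    (∀ ϑ : ℝ, 0 < ϑ →
      HasDerivAt (gammaStar a f σ)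
        (ϑ + ϑ * (f ^ 2 * ϑ ^ 2 + σ ^ 2 * (1 + a ^ 2)) /
          Real.sqrt ((σ ^ 2 * (1 - a ^ 2) - f ^ 2 * ϑ ^ 2) ^ 2 + 4 * f ^ 2 * ϑ ^ 2 * σ ^ 2)) ϑ) ∧
    (∀ ϑ : ℝ, 0 < ϑ →
      0 < ϑ + ϑ * (f ^ 2 * ϑ ^ 2 + σ ^ 2 * (1 + a ^ 2)) /
        Real.sqrt ((σ ^ 2 * (1 - a ^ 2) - f ^ 2 * ϑ ^ 2) ^ 2 + 4 * f ^ 2 * ϑ ^ 2 * σ ^ 2)) ∧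
    StrictMonoOn (gammaStar a f σ) (Set.Ioi 0) := by
  have hderiv := gammaStar_hasDeriv a f σ hf hσ
  have hpos : ∀ ϑ : ℝ, 0 < ϑ →
      0 < ϑ + ϑ * (f ^ 2 * ϑ ^ 2 + σ ^ 2 * (1 + a ^ 2)) /
        Real.sqrt ((σ ^ 2 * (1 - a ^ 2) - f ^ 2 * ϑ ^ 2) ^ 2 + 4 * f ^ 2 * ϑ ^ 2 * σ ^ 2) := by
    intro ϑ hϑ
    have hQpos := Qpos a f σ ϑ hf hσ hϑ
    have hs : 0 < Real.sqrt ((σ ^ 2 * (1 - a ^ 2) - f ^ 2 * ϑ ^ 2) ^ 2 + 4 * f ^ 2 * ϑ ^ 2 * σ ^ 2) :=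
      Real.sqrt_pos.mpr hQpos
    have hf2 : 0 < f ^ 2 := by positivity
    have hnum : 0 < ϑ * (f ^ 2 * ϑ ^ 2 + σ ^ 2 * (1 + a ^ 2)) := by
      have : 0 < 1 + a ^ 2 := by positivity
      positivity
    positivity
  refine ⟨hderiv, hpos, ?_⟩
  refine strictMonoOn_of_deriv_pos (convex_Ioi 0) ?_ ?_
  · intro x hx
    exact ((hderiv x hx).differentiableAt).continuousAt.continuousWithinAt
  · intro x hx
    rw [interior_Ioi] at hx
    rw [(hderiv x hx).deriv]
    exact hpos x hx

end HiddenAR
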